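/- Let Ω be a finite probability space, I a finite node index set, A the node-edge incidence matrix of the network, and consider the global problem V* = inf { Σ_{i∈I} J_P^i(f^i) + J_T(q) : A q_t(ω) + f_t(ω) = 0 for all t and ω }. Then for every deterministic price vector p and every deterministic resource vector r belonging to the range of the (block-diagonal extension of the) incidence matrix, the sandwich inequality holds: Σ_{i∈I} V̲_P^i[p^i] + V̲_T[p] ≤ V* ≤ Σ_{i∈I} V̄_P^i[r^i] + V̄_T[r], where V̲_P^i[p^i] = inf_{f^i} J_P^i(f^i) + E[⟨p^i, f^i⟩], V̲_T[p] = inf_q J_T(q) + E[⟨Aᵀp, q⟩], V̄_P^i[r^i] = inf { J_P^i(f^i) : f^i(ω) = r^i for all ω }, and V̄_T[r] = inf { J_T(q) : A q_t(ω) + r_t = 0 for all t and ω }. -/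
import Mathlib


open Matrix

section Sandwich

variable {I : Type*} [Fintype I] {Ω : Type*} [Fintype Ω] [Nonempty Ω] {T m : ℕ}

/-- Nodal price value function `V̲_P^i[p^i] = inf_{f^i} J_P^i(f^i) + E[⟨p^i, f^i⟩]`. -/
noncomputable def nodalPriceValue (μ : Ω → ℝ) (JP : (Ω → Fin T → ℝ) → ℝ)
    (pi : Fin T → ℝ) : EReal :=
  ⨅ f : Ω → Fin T → ℝ, ((JP f + ∑ ω, μ ω * ∑ t, pi t * f ω t : ℝ) : EReal)

/-- Edge price value function `V̲_T[p] = inf_q J_T(q) + E[⟨Aᵀp, q⟩]`. -/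
noncomputable def edgePriceValue (μ : Ω → ℝ) (A : Matrix I (Fin m) ℝ)
    (JT : (Ω → Fin T → Fin m → ℝ) → ℝ) (p : I → Fin T → ℝ) : EReal :=
  ⨅ q : Ω → Fin T → Fin m → ℝ,
    ((JT q + ∑ ω, μ ω * ∑ t, Aᵀ.mulVec (fun i => p i t) ⬝ᵥ q ω t : ℝ) : EReal)

/-- Nodal resource value function `V̄_P^i[r^i] = inf {J_P^i(f^i) : f^i(ω) = r^i ∀ω}`. -/
noncomputable def nodalResourceValue (JP : (Ω → Fin T → ℝ) → ℝ) (ri : Fin T → ℝ) :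
    EReal :=
  ⨅ (f : Ω → Fin T → ℝ) (_ : ∀ ω, f ω = ri), ((JP f : ℝ) : EReal)

/-- Edge resource value function `V̄_T[r] = inf {J_T(q) : A qₜ(ω) + rₜ = 0 ∀t ∀ω}`. -/
noncomputable def edgeResourceValue (A : Matrix I (Fin m) ℝ)
    (JT : (Ω → Fin T → Fin m → ℝ) → ℝ) (r : I → Fin T → ℝ) : EReal :=
  ⨅ (q : Ω → Fin T → Fin m → ℝ)
    (_ : ∀ (t : Fin T) (ω : Ω), A.mulVec (q ω t) + (fun i => r i t) = 0),
    ((JT q : ℝ) : EReal)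

private lemma EReal.coe_finset_sum' {ι : Type*} (s : Finset ι) (g : ι → ℝ) :
    ((∑ i ∈ s, g i : ℝ) : EReal) = ∑ i ∈ s, ((g i : ℝ) : EReal) :=
  map_sum (⟨⟨(Real.toEReal ·), EReal.coe_zero⟩, EReal.coe_add⟩ : ℝ →+ EReal) g s

private lemma nodalResourceValue_eq {Ω : Type*} [Fintype Ω] [Nonempty Ω] {T : ℕ}
    (JP : (Ω → Fin T → ℝ) → ℝ) (ri : Fin T → ℝ) :
    nodalResourceValue JP ri = ((JP (fun _ => ri) : ℝ) : EReal) := by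
  refine le_antisymm (iInf₂_le (fun _ => ri) (fun ω => rfl)) ?_
  refine le_iInf₂ fun f hf => ?_
  have : f = fun _ => ri := funext hf
  rw [this]

/-- Sandwich inequality: for every deterministic price `p` and every
deterministic resource `r` in the range of the incidence matrix,
`Σᵢ V̲_P^i[p^i] + V̲_T[p] ≤ V* ≤ Σᵢ V̄_P^i[r^i] + V̄_T[r]`, where `V*` is the
optimal value of the global problem with coupling constraint
`A qₜ(ω) + fₜ(ω) = 0` for all `t` and `ω`. -/
theorem sandwich_price_resource_bounds
    (μ : Ω → ℝ) (hμ0 : ∀ ω, 0 ≤ μ ω) (hμ1 : ∑ ω, μ ω = 1)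
    (A : Matrix I (Fin m) ℝ)
    (JP : (i : I) → (Ω → Fin T → ℝ) → ℝ) (JT : (Ω → Fin T → Fin m → ℝ) → ℝ)
    (p : I → Fin T → ℝ) (r : I → Fin T → ℝ)
    (hr : ∀ t : Fin T, ∃ q0 : Fin m → ℝ, A.mulVec q0 + (fun i => r i t) = 0) :
    (∑ i, nodalPriceValue μ (JP i) (p i)) + edgePriceValue μ A JT p ≤
        (⨅ (f : I → Ω → Fin T → ℝ) (q : Ω → Fin T → Fin m → ℝ)
          (_ : ∀ (t : Fin T) (ω : Ω), A.mulVec (q ω t) + (fun i => f i ω t) = 0),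
          (((∑ i, JP i (f i)) + JT q : ℝ) : EReal)) ∧
      (⨅ (f : I → Ω → Fin T → ℝ) (q : Ω → Fin T → Fin m → ℝ)
          (_ : ∀ (t : Fin T) (ω : Ω), A.mulVec (q ω t) + (fun i => f i ω t) = 0),
          (((∑ i, JP i (f i)) + JT q : ℝ) : EReal)) ≤
        (∑ i, nodalResourceValue (JP i) (r i)) + edgeResourceValue A JT r := by
  constructor
  · -- lower bound
    refine le_iInf fun f => le_iInf fun q => le_iInf fun hfq => ?_
    have h1 : (∑ i, nodalPriceValue μ (JP i) (p i)) ≤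
        ((∑ i, (JP i (f i) + ∑ ω, μ ω * ∑ t, p i t * f i ω t) : ℝ) : EReal) := by
      rw [EReal.coe_finset_sum']
      exact Finset.sum_le_sum fun i _ => iInf_le _ (f i)
    have h2 : edgePriceValue μ A JT p ≤
        ((JT q + ∑ ω, μ ω * ∑ t, Aᵀ.mulVec (fun i => p i t) ⬝ᵥ q ω t : ℝ) : EReal) :=
      iInf_le _ q
    refine le_trans (add_le_add h1 h2) ?_
    rw [← EReal.coe_add, EReal.coe_le_coe_iff]
    have key : (∑ i, ∑ ω, μ ω * ∑ t, p i t * f i ω t) +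
        ∑ ω, μ ω * ∑ t, Aᵀ.mulVec (fun i => p i t) ⬝ᵥ q ω t = 0 := by
      rw [Finset.sum_comm, ← Finset.sum_add_distrib]
      refine Finset.sum_eq_zero fun ω _ => ?_
      rw [← Finset.mul_sum, ← mul_add]
      have : (∑ i, ∑ t, p i t * f i ω t) +
          ∑ t, Aᵀ.mulVec (fun i => p i t) ⬝ᵥ q ω t = 0 := by
        rw [Finset.sum_comm, ← Finset.sum_add_distrib]
        refine Finset.sum_eq_zero fun t _ => ?_
        have hA : A.mulVec (q ω t) = - fun i => f i ω t :=
          eq_neg_of_add_eq_zero_left (hfq t ω)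
        have : Aᵀ.mulVec (fun i => p i t) ⬝ᵥ q ω t
            = (fun i => p i t) ⬝ᵥ A.mulVec (q ω t) := by
          rw [Matrix.dotProduct_mulVec, Matrix.mulVec_transpose]
        rw [this, hA]
        simp [dotProduct, mul_comm]
      rw [this, mul_zero]
    rw [Finset.sum_add_distrib, add_add_add_comm, key, add_zero]
  · -- upper bound
    have hsum : (∑ i, nodalResourceValue (JP i) (r i)) =
        ((∑ i, JP i (fun _ => r i) : ℝ) : EReal) := by
      rw [EReal.coe_finset_sum']
      exact Finset.sum_congr rfl fun i _ => nodalResourceValue_eq (JP i) (r i)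
    rw [hsum, add_comm]
    rw [← EReal.sub_le_iff_le_add (Or.inl (EReal.coe_ne_bot _))
      (Or.inl (EReal.coe_ne_top _))]
    refine le_iInf fun q => le_iInf fun hq => ?_
    rw [EReal.sub_le_iff_le_add (Or.inl (EReal.coe_ne_bot _))
      (Or.inl (EReal.coe_ne_top _))]
    calc (⨅ (f : I → Ω → Fin T → ℝ) (q : Ω → Fin T → Fin m → ℝ)
          (_ : ∀ (t : Fin T) (ω : Ω), A.mulVec (q ω t) + (fun i => f i ω t) = 0),
          (((∑ i, JP i (f i)) + JT q : ℝ) : EReal))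
        ≤ (((∑ i, JP i (fun _ => r i)) + JT q : ℝ) : EReal) := by
          refine le_trans (iInf_le _ (fun i _ => r i)) ?_
          exact le_trans (iInf_le _ q) (iInf_le _ hq)
      _ ≤ _ := by rw [EReal.coe_add, add_comm]

end Sandwich
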